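/- Let S be a set, L > 0, n ∈ ℕ, and F a class of functions S → [−L,L]. Let Rel be a real-valued function on pairs of finite sequences ((s_1,…,s_k),(y_1,…,y_k)) with s_j ∈ S, y_j ∈ [−L,L], 0 ≤ k ≤ n, satisfying the initial condition Rel(s_{1:n}, y_{1:n}) ≥ − inf_{μ∈F} Σ_{i=1}^n (y_i − μ(s_i))² for all such length-n sequences. Suppose given data s_1,…,s_n ∈ S and y_1,…,y_n ∈ [−L,L], the predictions ŷ_1,…,ŷ_n ∈ [−L,L] satisfy, for every i ∈ [n], sup_{y ∈ [−L,L]} { (ŷ_i − y)² + Rel(s_{1:i}, (y_{1:i−1}, y)) } ≤ Rel(s_{1:i−1}, y_{1:i−1}). Then the regret is bounded by the relaxation at the empty sequence: Σ_{i=1}^n (ŷ_i − y_i)² − inf_{μ∈F} Σ_{i=1}^n (y_i − μ(s_i))² ≤ Rel(∅, ∅). -/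

import Mathlib

open scoped BigOperators

noncomputable section

/-- regret bound for a generic forecaster based on an admissible relaxation
(the relaxation recipe of Rakhlin–Shamir–Sridharan). -/
theorem relaxation_regret_bound
    {S : Type*} (L : ℝ) (hL : 0 < L) (n : ℕ)
    -- the function class F ⊆ (S → [-L, L])
    (F : Set (S → ℝ)) (hF_ne : F.Nonempty)
    (hF_range : ∀ μ ∈ F, ∀ x, μ x ∈ Set.Icc (-L) L)
    -- the relaxation, defined on pairs of finite sequences of each length k
    (Rel : (k : ℕ) → (Fin k → S) → (Fin k → ℝ) → ℝ)
    -- initial condition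
    (hinit : ∀ (sseq : Fin n → S) (yseq : Fin n → ℝ),
      (∀ i, yseq i ∈ Set.Icc (-L) L) →
      -sInf ((fun μ => ∑ i : Fin n, (yseq i - μ (sseq i)) ^ 2) '' F) ≤ Rel n sseq yseq)
    -- the observed data and predictions
    (s : Fin n → S) (y : Fin n → ℝ) (hy : ∀ i, y i ∈ Set.Icc (-L) L)
    (yhat : Fin n → ℝ) (hyhat : ∀ i, yhat i ∈ Set.Icc (-L) L)
    -- the admissibility condition along the data:
    -- sup over y ∈ [-L,L] of {(ŷ_i − y)² + Rel(s_{1:i}, (y_{1:i-1}, y))} ≤ Rel(s_{1:i-1}, y_{1:i-1})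
    (hadm : ∀ (i : Fin n), ∀ yy ∈ Set.Icc (-L) L,
      (yhat i - yy) ^ 2
          + Rel ((i : ℕ) + 1) (fun j : Fin ((i : ℕ) + 1) => s (Fin.castLE i.isLt j))
              (Fin.snoc (fun j : Fin (i : ℕ) => y (Fin.castLE i.isLt.le j)) yy)
        ≤ Rel (i : ℕ) (fun j : Fin (i : ℕ) => s (Fin.castLE i.isLt.le j))
            (fun j : Fin (i : ℕ) => y (Fin.castLE i.isLt.le j))) :
    (∑ i : Fin n, (yhat i - y i) ^ 2)
        - sInf ((fun μ => ∑ i : Fin n, (y i - μ (s i)) ^ 2) '' F)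
      ≤ Rel 0 Fin.elim0 Fin.elim0 := by

  -- Key induction: for every k ≤ n, partial loss + Rel k ≤ Rel 0
  have key : ∀ (k : ℕ) (hk : k ≤ n),
      (∑ i : Fin k, (yhat (Fin.castLE hk i) - y (Fin.castLE hk i)) ^ 2)
        + Rel k (fun j => s (Fin.castLE hk j)) (fun j => y (Fin.castLE hk j))
      ≤ Rel 0 Fin.elim0 Fin.elim0 := by
    intro k
    induction k with
    | zero =>
      intro hk
      have hs : (fun j : Fin 0 => s (Fin.castLE hk j)) = Fin.elim0 := by
        funext j; exact j.elim0
      have hy0 : (fun j : Fin 0 => y (Fin.castLE hk j)) = Fin.elim0 := by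
        funext j; exact j.elim0
      simp [hs, hy0]
    | succ k ih =>
      intro hk
      have hk' : k ≤ n := Nat.le_of_succ_le hk
      have hklt : k < n := hk
      set i : Fin n := ⟨k, hklt⟩ with hi
      have hadm' := hadm i (y i) (hy i)
      -- rewrite the snoc
      have hsnoc : (Fin.snoc (fun j : Fin (i : ℕ) => y (Fin.castLE i.isLt.le j)) (y i) :
          Fin ((i:ℕ)+1) → ℝ) = fun j : Fin ((i:ℕ)+1) => y (Fin.castLE i.isLt j) := by
        funext j
        refine Fin.lastCases ?_ ?_ j
        · simp only [Fin.snoc_last]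
          congr 1
        · intro j'
          simp only [Fin.snoc_castSucc]
          rfl
      rw [hsnoc] at hadm'
      have hsum : (∑ j : Fin (k+1), (yhat (Fin.castLE hk j) - y (Fin.castLE hk j)) ^ 2)
          = (∑ j : Fin k, (yhat (Fin.castLE hk' j) - y (Fin.castLE hk' j)) ^ 2)
            + (yhat i - y i) ^ 2 := by
        rw [Fin.sum_univ_castSucc]
        rfl
      have hcast : ∀ (f : Fin n → ℝ), (fun j : Fin ((i:ℕ)+1) => f (Fin.castLE i.isLt j))
          = fun j : Fin (k+1) => f (Fin.castLE hk j) := fun f => rfl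
      have hcastS : (fun j : Fin ((i:ℕ)+1) => s (Fin.castLE i.isLt j))
          = fun j : Fin (k+1) => s (Fin.castLE hk j) := rfl
      have hcast2 : ∀ (f : Fin n → ℝ), (fun j : Fin (i:ℕ) => f (Fin.castLE i.isLt.le j))
          = fun j : Fin k => f (Fin.castLE hk' j) := fun f => rfl
      calc (∑ j : Fin (k+1), (yhat (Fin.castLE hk j) - y (Fin.castLE hk j)) ^ 2)
            + Rel (k+1) (fun j => s (Fin.castLE hk j)) (fun j => y (Fin.castLE hk j))
          = (∑ j : Fin k, (yhat (Fin.castLE hk' j) - y (Fin.castLE hk' j)) ^ 2)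
            + ((yhat i - y i) ^ 2
              + Rel ((i:ℕ)+1) (fun j => s (Fin.castLE i.isLt j))
                  (fun j => y (Fin.castLE i.isLt j))) := by
            rw [hsum, hcastS, hcast y]; ring
        _ ≤ (∑ j : Fin k, (yhat (Fin.castLE hk' j) - y (Fin.castLE hk' j)) ^ 2)
            + Rel (i:ℕ) (fun j => s (Fin.castLE i.isLt.le j))
                (fun j => y (Fin.castLE i.isLt.le j)) := by
            exact add_le_add_right hadm' _
        _ = (∑ j : Fin k, (yhat (Fin.castLE hk' j) - y (Fin.castLE hk' j)) ^ 2)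
            + Rel k (fun j => s (Fin.castLE hk' j)) (fun j => y (Fin.castLE hk' j)) := rfl
        _ ≤ Rel 0 Fin.elim0 Fin.elim0 := ih hk'
  have hn := key n le_rfl
  have hcastid : (Fin.castLE (le_refl n)) = id := by
    funext j; ext; simp
  have h1 : (∑ i : Fin n, (yhat i - y i) ^ 2)
      + Rel n s y ≤ Rel 0 Fin.elim0 Fin.elim0 := by
    simpa [hcastid] using hn
  have h2 := hinit s y hy
  linarith
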